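/- (First order matching class for the bivariate normal correlation.) Fix ρ₀ ∈ (−1,1) and let a, b > 0 (representing a = A₁′(1+ρ₀) and b = A₂′(1−ρ₀) for a C¹ one-to-one transformation A = (A₁,A₂) of the sufficient statistics). Define the limiting Jacobian J(ρ₀,ρ) := a(1+ρ₀)/(1+ρ) + b(1−ρ₀)/(1−ρ) on (−1,1) and the Fisher information I(ρ) := (1+ρ²)/(1−ρ²)². Then the first order term vanishes, i.e. Δ₁ := I(ρ₀)^{−1/2} · (∂/∂ρ) log J(ρ₀,ρ)|_{ρ=ρ₀} + (d/dρ) I(ρ)^{−1/2}|_{ρ=ρ₀} = 0, if and only if a = b (1−ρ₀)²/(1+ρ₀)². -/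

import Mathlib

open MeasureTheory Filter Set Topology

/-- First order matching class for the bivariate normal correlation.
With limiting Jacobian `J(ρ₀,ρ) = a(1+ρ₀)/(1+ρ) + b(1−ρ₀)/(1−ρ)` and Fisher information
`I(ρ) = (1+ρ²)/(1−ρ²)²`, the first order coverage term
`Δ₁ = I(ρ₀)^{−1/2} ∂_ρ log J(ρ₀,ρ)|_{ρ₀} + (d/dρ)I(ρ)^{−1/2}|_{ρ₀}` vanishes if and only if
`a = b(1−ρ₀)²/(1+ρ₀)²`. -/
theorem first_order_matching_bivariate_normal
    (ρ₀ : ℝ) (hρ₀ : ρ₀ ∈ Set.Ioo (-1 : ℝ) 1)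
    (a b : ℝ) (ha : 0 < a) (hb : 0 < b)
    (J : ℝ → ℝ) (hJ : ∀ ρ : ℝ, J ρ = a * (1 + ρ₀) / (1 + ρ) + b * (1 - ρ₀) / (1 - ρ))
    (I : ℝ → ℝ) (hI : ∀ ρ : ℝ, I ρ = (1 + ρ ^ 2) / (1 - ρ ^ 2) ^ 2) :
    (Real.sqrt (I ρ₀))⁻¹ * deriv (fun ρ => Real.log (J ρ)) ρ₀ +
        deriv (fun ρ => (Real.sqrt (I ρ))⁻¹) ρ₀ = 0
      ↔ a = b * (1 - ρ₀) ^ 2 / (1 + ρ₀) ^ 2 := by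
  obtain ⟨ht1, ht2⟩ := hρ₀
  have h1p : (0:ℝ) < 1 + ρ₀ := by linarith
  have h1m : (0:ℝ) < 1 - ρ₀ := by linarith
  set s : ℝ := Real.sqrt (1 + ρ₀ ^ 2) with hs
  have hspos : 0 < s := Real.sqrt_pos.mpr (by positivity)
  have hs2 : s ^ 2 = 1 + ρ₀ ^ 2 := Real.sq_sqrt (by positivity)
  -- derivative of log J
  have hJfun : (fun ρ => Real.log (J ρ)) =
      fun ρ => Real.log (a * (1 + ρ₀) / (1 + ρ) + b * (1 - ρ₀) / (1 - ρ)) :=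
    funext fun ρ => by rw [hJ]
  have hd1 : HasDerivAt (fun ρ : ℝ => a * (1 + ρ₀) / (1 + ρ)) (-a / (1 + ρ₀)) ρ₀ := by
    have hden : HasDerivAt (fun ρ : ℝ => 1 + ρ) 1 ρ₀ := (hasDerivAt_id ρ₀).const_add 1
    have h := (hasDerivAt_const ρ₀ (a * (1 + ρ₀))).div hden (ne_of_gt h1p)
    refine h.congr_deriv ?_
    field_simp
    ring
  have hd2 : HasDerivAt (fun ρ : ℝ => b * (1 - ρ₀) / (1 - ρ)) (b / (1 - ρ₀)) ρ₀ := by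
    have hden : HasDerivAt (fun ρ : ℝ => 1 - ρ) (-1) ρ₀ := by
      simpa using ((hasDerivAt_id ρ₀).const_sub 1)
    have h := (hasDerivAt_const ρ₀ (b * (1 - ρ₀))).div hden (ne_of_gt h1m)
    refine h.congr_deriv ?_
    field_simp
    ring
  have hJd : HasDerivAt (fun ρ : ℝ => a * (1 + ρ₀) / (1 + ρ) + b * (1 - ρ₀) / (1 - ρ))
      (-a / (1 + ρ₀) + b / (1 - ρ₀)) ρ₀ := hd1.add hd2
  have hJval : a * (1 + ρ₀) / (1 + ρ₀) + b * (1 - ρ₀) / (1 - ρ₀) = a + b := by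
    field_simp
  have hlog : deriv (fun ρ => Real.log (J ρ)) ρ₀ =
      (-a / (1 + ρ₀) + b / (1 - ρ₀)) / (a + b) := by
    rw [hJfun]
    have := (hJd.log (by rw [hJval]; positivity)).deriv
    rw [this, hJval]
  -- derivative of (sqrt (I ρ))⁻¹
  have hpt : ∀ ρ : ℝ, -1 < ρ → ρ < 1 →
      (Real.sqrt (I ρ))⁻¹ = (1 - ρ ^ 2) / Real.sqrt (1 + ρ ^ 2) := by
    intro ρ h1 h2
    have hρm : (0:ℝ) < 1 - ρ ^ 2 := by nlinarith
    rw [hI, Real.sqrt_div (by positivity), Real.sqrt_sq hρm.le, inv_div]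
  have hEv : (fun ρ => (Real.sqrt (I ρ))⁻¹) =ᶠ[nhds ρ₀]
      (fun ρ => (1 - ρ ^ 2) / Real.sqrt (1 + ρ ^ 2)) := by
    filter_upwards [Ioo_mem_nhds ht1 ht2] with ρ hρ
    exact hpt ρ hρ.1 hρ.2
  have hgd : HasDerivAt (fun ρ : ℝ => (1 - ρ ^ 2) / Real.sqrt (1 + ρ ^ 2))
      (-ρ₀ * (3 + ρ₀ ^ 2) / s ^ 3) ρ₀ := by
    have hnum : HasDerivAt (fun ρ : ℝ => 1 - ρ ^ 2) (-(2 * ρ₀)) ρ₀ := by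
      simpa using (hasDerivAt_pow 2 ρ₀).const_sub 1
    have hinner : HasDerivAt (fun ρ : ℝ => 1 + ρ ^ 2) (2 * ρ₀) ρ₀ := by
      simpa using (hasDerivAt_pow 2 ρ₀).const_add 1
    have hsq : HasDerivAt (fun ρ : ℝ => Real.sqrt (1 + ρ ^ 2))
        (2 * ρ₀ / (2 * Real.sqrt (1 + ρ₀ ^ 2))) ρ₀ := hinner.sqrt (by positivity)
    have h := hnum.div hsq (ne_of_gt hspos)
    refine h.congr_deriv ?_
    rw [← hs]
    field_simp
    linear_combination (-2 * ρ₀) * hs2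
  have hderiv2 : deriv (fun ρ => (Real.sqrt (I ρ))⁻¹) ρ₀ = -ρ₀ * (3 + ρ₀ ^ 2) / s ^ 3 := by
    rw [hEv.deriv_eq, hgd.deriv]
  have hfac : (Real.sqrt (I ρ₀))⁻¹ = (1 - ρ₀ ^ 2) / s := hpt ρ₀ ht1 ht2
  rw [hfac, hlog, hderiv2]
  have hab : (0:ℝ) < a + b := by linarith
  have hid : (b * (1 - ρ₀) ^ 2 - a * (1 + ρ₀) ^ 2) =
      ((1 - ρ₀ ^ 2) / s * ((-a / (1 + ρ₀) + b / (1 - ρ₀)) / (a + b)) +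
        -ρ₀ * (3 + ρ₀ ^ 2) / s ^ 3) * ((a + b) * s ^ 3) := by
    field_simp
    linear_combination (-((1 - ρ₀ ^ 2) * (b * (1 + ρ₀) - a * (1 - ρ₀)))) * hs2
  constructor
  · intro h
    have key : b * (1 - ρ₀) ^ 2 - a * (1 + ρ₀) ^ 2 = 0 := by
      have h2 : ((1 - ρ₀ ^ 2) / s * ((-a / (1 + ρ₀) + b / (1 - ρ₀)) / (a + b)) +
          -ρ₀ * (3 + ρ₀ ^ 2) / s ^ 3) * ((a + b) * s ^ 3) = 0 := by rw [h]; ring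
      rw [hid, h2]
    field_simp
    linarith
  · intro h
    have key : b * (1 - ρ₀) ^ 2 - a * (1 + ρ₀) ^ 2 = 0 := by
      rw [h]; field_simp; ring
    have := hid.symm.trans key
    have hne : (a + b) * s ^ 3 ≠ 0 := by positivity
    exact (mul_eq_zero.mp this).resolve_right hne
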